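/- arXiv:2305.14258 — 2 statements merged into one kernel-verified Lean document; each statement's English description precedes it below -/
import Mathlib

section
/- (Positive-unlabeled AUC risk.) Let p_P and p_N be probability measures on X, let π_P, π_N ∈ [0,1] with π_P + π_N = 1, and let p_U = π_P·p_P + π_N·p_N be the unlabeled (marginal) distribution. Assume f : X → ℝ is measurable and the pushforward distributions of f under p_P and under p_N are atomless. Then the P-U 0–1 AUC risk satisfies R(f; p_P, p_U) = π_N·R_PN(f) + π_P/2. -/
open MeasureTheory

/-- The AUC risk of score function `f` under the 0–1 loss, with positive distribution `μ`
and negative distribution `ν`: `R(f; μ, ν) = ∫∫ 𝟙[f(x) − f(x') < 0] dμ(x) dν(x')`. -/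
noncomputable def AUCRisk {X : Type*} [MeasurableSpace X] (f : X → ℝ)
    (μ ν : Measure X) : ℝ :=
  ∫ x, ∫ x', (if f x - f x' < 0 then (1 : ℝ) else 0) ∂ν ∂μ

section Aux

variable {X : Type*} [MeasurableSpace X] {f : X → ℝ}

private lemma int_if {α : Type*} [MeasurableSpace α] {p : α → Prop} [DecidablePred p]
    (hs : MeasurableSet {x | p x}) (μ : Measure α) [IsFiniteMeasure μ] :
    Integrable (fun x => if p x then (1 : ℝ) else 0) μ := by
  have h : (fun x => if p x then (1 : ℝ) else 0)
      = Set.indicator {x | p x} (fun _ => (1 : ℝ)) := by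
    funext x; by_cases h : p x <;> simp [Set.indicator_apply, h]
  rw [h]
  exact (integrable_const (1 : ℝ)).indicator hs

private lemma int_ind (hf : Measurable f) (μ ν : Measure X)
    [IsFiniteMeasure μ] [IsFiniteMeasure ν] :
    Integrable (fun p : X × X => if f p.1 - f p.2 < 0 then (1 : ℝ) else 0) (μ.prod ν) :=
  int_if (measurableSet_lt ((hf.comp measurable_fst).sub (hf.comp measurable_snd))
    measurable_const) _

private lemma int_ind' (hf : Measurable f) (μ ν : Measure X)
    [IsFiniteMeasure μ] [IsFiniteMeasure ν] :
    Integrable (fun p : X × X => if f p.2 - f p.1 < 0 then (1 : ℝ) else 0) (μ.prod ν) :=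
  int_if (measurableSet_lt ((hf.comp measurable_snd).sub (hf.comp measurable_fst))
    measurable_const) _

private lemma int_ind_inner (hf : Measurable f) (μ : Measure X) [IsFiniteMeasure μ] (t : ℝ) :
    Integrable (fun x' : X => if t - f x' < 0 then (1 : ℝ) else 0) μ :=
  int_if (measurableSet_lt (measurable_const.sub hf) measurable_const) _

private lemma int_ind_inner' (hf : Measurable f) (μ : Measure X) [IsFiniteMeasure μ] (t : ℝ) :
    Integrable (fun x' : X => if f x' - t < 0 then (1 : ℝ) else 0) μ :=
  int_if (measurableSet_lt (hf.sub measurable_const) measurable_const) _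

/-- The diagonal AUC risk is 1/2 when the score distribution is atomless. -/
private lemma auc_self (hf : Measurable f) (μ : Measure X) [IsProbabilityMeasure μ]
    (hμ : ∀ t : ℝ, μ {x | f x = t} = 0) :
    AUCRisk f μ μ = 1 / 2 := by
  set I := AUCRisk f μ μ with hI
  set J := ∫ x, ∫ x', (if f x' - f x < 0 then (1 : ℝ) else 0) ∂μ ∂μ with hJ
  have hJI : J = I := by
    rw [hJ, hI, AUCRisk]
    exact integral_integral_swap (int_ind' hf μ μ)
  have hsum : I + J = 1 := by
    have hinner : ∀ x : X,
        (∫ x', (if f x - f x' < 0 then (1 : ℝ) else 0) ∂μ)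
        + (∫ x', (if f x' - f x < 0 then (1 : ℝ) else 0) ∂μ) = 1 := by
      intro x
      rw [← integral_add (int_ind_inner hf μ (f x)) (int_ind_inner' hf μ (f x))]
      have hptw : (fun x' => (if f x - f x' < 0 then (1 : ℝ) else 0)
            + (if f x' - f x < 0 then (1 : ℝ) else 0))
          = fun x' => 1 - (if f x' = f x then (1 : ℝ) else 0) := by
        funext x'
        rcases lt_trichotomy (f x) (f x') with h | h | h
        · rw [if_pos (by linarith), if_neg (by linarith), if_neg (by linarith)]; ring
        · rw [if_neg (by linarith), if_neg (by linarith), if_pos h.symm]; ring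
        · rw [if_neg (by linarith), if_pos (by linarith), if_neg (by linarith)]; ring
      have hms : MeasurableSet {x' : X | f x' = f x} := hf (measurableSet_singleton (f x))
      have hint2 : Integrable (fun x' : X => if f x' = f x then (1 : ℝ) else 0) μ :=
        int_if hms μ
      rw [hptw, integral_sub (integrable_const 1) hint2, integral_const]
      have heq : ∫ x', (if f x' = f x then (1 : ℝ) else 0) ∂μ = 0 := by
        have h1 : (fun x' => if f x' = f x then (1 : ℝ) else 0)
            = Set.indicator {x' | f x' = f x} (fun _ => (1 : ℝ)) := by
          funext x'; by_cases h : f x' = f x <;> simp [Set.indicator_apply, h]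
        rw [h1, integral_indicator hms, setIntegral_const, Measure.real, hμ (f x)]
        simp
      rw [heq]; simp
    have hIint : Integrable
        (fun x => ∫ x', (if f x - f x' < 0 then (1 : ℝ) else 0) ∂μ) μ :=
      (int_ind hf μ μ).integral_prod_left
    have hJint : Integrable
        (fun x => ∫ x', (if f x' - f x < 0 then (1 : ℝ) else 0) ∂μ) μ :=
      (int_ind' hf μ μ).integral_prod_left
    rw [hI, hJ, AUCRisk, ← integral_add hIint hJint]
    calc (∫ x, ((∫ x', (if f x - f x' < 0 then (1 : ℝ) else 0) ∂μ)
            + ∫ x', (if f x' - f x < 0 then (1 : ℝ) else 0) ∂μ) ∂μ)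
        = ∫ _x, (1 : ℝ) ∂μ := by exact integral_congr_ae (Filter.Eventually.of_forall hinner)
      _ = 1 := by simp
  rw [hJI] at hsum
  linarith

end Aux

/-- positive-unlabeled AUC risk:
`R(f; p_P, p_U) = π_N·R_PN(f) + π_P/2`. -/
theorem positive_unlabeled_auc_risk {X : Type*} [MeasurableSpace X]
    (pP pN : Measure X) [IsProbabilityMeasure pP] [IsProbabilityMeasure pN]
    (πP πN : ℝ) (hπP : πP ∈ Set.Icc (0 : ℝ) 1) (hπN : πN ∈ Set.Icc (0 : ℝ) 1)
    (hsum : πP + πN = 1)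
    (f : X → ℝ) (hf : Measurable f)
    (hP : ∀ t : ℝ, pP {x | f x = t} = 0)
    (hN : ∀ t : ℝ, pN {x | f x = t} = 0)
    (pU : Measure X)
    (hpU : pU = ENNReal.ofReal πP • pP + ENNReal.ofReal πN • pN) :
    AUCRisk f pP pU = πN * AUCRisk f pP pN + πP / 2 := by
  have hinner : ∀ x : X,
      (∫ x', (if f x - f x' < 0 then (1 : ℝ) else 0) ∂pU)
      = πP * (∫ x', (if f x - f x' < 0 then (1 : ℝ) else 0) ∂pP)
        + πN * (∫ x', (if f x - f x' < 0 then (1 : ℝ) else 0) ∂pN) := by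
    intro x
    rw [hpU, integral_add_measure
      (((int_ind_inner hf pP (f x))).smul_measure ENNReal.ofReal_ne_top)
      (((int_ind_inner hf pN (f x))).smul_measure ENNReal.ofReal_ne_top),
      integral_smul_measure, integral_smul_measure,
      ENNReal.toReal_ofReal hπP.1, ENNReal.toReal_ofReal hπN.1, smul_eq_mul, smul_eq_mul]
  have hstep : AUCRisk f pP pU = πP * AUCRisk f pP pP + πN * AUCRisk f pP pN := by
    rw [AUCRisk, integral_congr_ae (Filter.Eventually.of_forall hinner),
      integral_add (((int_ind hf pP pP).integral_prod_left).const_mul πP)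
        (((int_ind hf pP pN).integral_prod_left).const_mul πN),
      integral_const_mul, integral_const_mul]
    rfl
  rw [hstep, auc_self hf pP hP]
  ring
end

section
/- (Noisy semi-supervised AUC identity.) Let p_P and p_N be probability measures on X, let π_P, π_N ∈ [0,1] with π_P + π_N = 1, let η_P, η_N ∈ [0,1], and define p_P̃ = (1−η_P)·p_P + η_P·p_N, p_Ñ = η_N·p_P + (1−η_N)·p_N, and p_U = π_P·p_P + π_N·p_N. Assume f : X → ℝ is measurable and the pushforward distributions of f under p_P and under p_N are atomless. Then R(f; p_P̃, p_U) + R(f; p_U, p_Ñ) − 1/2 = ã·R_PN(f) + (1 − ã)/2, where ã = 1 − η_P − η_N. -/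
open MeasureTheory

section Aux
variable {X : Type*} [MeasurableSpace X] {f : X → ℝ}

lemma inner_eq (hf : Measurable f) (ν : Measure X) (x : X) :
    ∫ x', (if f x - f x' < 0 then (1:ℝ) else 0) ∂ν
      = (ν {x' | f x < f x'}).toReal := by
  have h : ∀ x', (if f x - f x' < 0 then (1:ℝ) else 0)
      = Set.indicator {x' | f x < f x'} (fun _ => (1:ℝ)) x' := by
    intro x'
    by_cases hc : f x < f x' <;> simp [Set.indicator, hc, sub_neg]
  simp_rw [h]
  rw [integral_indicator_const (1:ℝ) (measurableSet_lt measurable_const hf)]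
  simp
  rfl

lemma auc_eq (hf : Measurable f) (μ ν : Measure X) :
    AUCRisk f μ ν = ∫ x, (ν {x' | f x < f x'}).toReal ∂μ := by
  unfold AUCRisk
  exact integral_congr_ae (Filter.Eventually.of_forall fun x => inner_eq hf ν x)

lemma meas_G (hf : Measurable f) (ν : Measure X) [SFinite ν] :
    Measurable fun x => (ν {x' | f x < f x'}).toReal := by
  apply Measurable.ennreal_toReal
  have hs : MeasurableSet {p : X × X | f p.1 < f p.2} :=
    measurableSet_lt (hf.comp measurable_fst) (hf.comp measurable_snd)
  have := measurable_measure_prodMk_left (ν := ν) hs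
  simpa [Set.preimage_setOf_eq] using this

lemma meas_G' (hf : Measurable f) (ν : Measure X) [SFinite ν] :
    Measurable fun x => (ν {x' | f x' < f x}).toReal := by
  apply Measurable.ennreal_toReal
  have hs : MeasurableSet {p : X × X | f p.2 < f p.1} :=
    measurableSet_lt (hf.comp measurable_snd) (hf.comp measurable_fst)
  have := measurable_measure_prodMk_left (ν := ν) hs
  simpa [Set.preimage_setOf_eq] using this

lemma integrable_G (hf : Measurable f) (μ ν : Measure X) [IsFiniteMeasure μ] [SFinite ν]
    [IsFiniteMeasure ν] :
    Integrable (fun x => (ν {x' | f x < f x'}).toReal) μ := by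
  apply Integrable.mono' (integrable_const (ν Set.univ).toReal)
    (meas_G hf ν).aestronglyMeasurable
  refine Filter.Eventually.of_forall fun x => ?_
  rw [Real.norm_eq_abs, abs_of_nonneg ENNReal.toReal_nonneg]
  exact ENNReal.toReal_mono (measure_ne_top ν _) (measure_mono (Set.subset_univ _))

lemma integrable_G' (hf : Measurable f) (μ ν : Measure X) [IsFiniteMeasure μ] [SFinite ν]
    [IsFiniteMeasure ν] :
    Integrable (fun x => (ν {x' | f x' < f x}).toReal) μ := by
  apply Integrable.mono' (integrable_const (ν Set.univ).toReal)
    (meas_G' hf ν).aestronglyMeasurable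
  refine Filter.Eventually.of_forall fun x => ?_
  rw [Real.norm_eq_abs, abs_of_nonneg ENNReal.toReal_nonneg]
  exact ENNReal.toReal_mono (measure_ne_top ν _) (measure_mono (Set.subset_univ _))

/-- Linearity in the left (positive) measure. -/
lemma auc_left (hf : Measurable f) (μ₁ μ₂ ν : Measure X)
    [IsFiniteMeasure μ₁] [IsFiniteMeasure μ₂] [IsFiniteMeasure ν]
    (c d : ℝ) (hc : 0 ≤ c) (hd : 0 ≤ d) :
    AUCRisk f (ENNReal.ofReal c • μ₁ + ENNReal.ofReal d • μ₂) ν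
      = c * AUCRisk f μ₁ ν + d * AUCRisk f μ₂ ν := by
  rw [auc_eq hf, auc_eq hf, auc_eq hf]
  rw [integral_add_measure
      ((integrable_G hf μ₁ ν).smul_measure ENNReal.ofReal_ne_top)
      ((integrable_G hf μ₂ ν).smul_measure ENNReal.ofReal_ne_top)]
  rw [integral_smul_measure, integral_smul_measure,
    ENNReal.toReal_ofReal hc, ENNReal.toReal_ofReal hd]
  simp [smul_eq_mul]

/-- Linearity in the right (negative) measure. -/
lemma auc_right (hf : Measurable f) (μ ν₁ ν₂ : Measure X)
    [IsFiniteMeasure μ] [IsFiniteMeasure ν₁] [IsFiniteMeasure ν₂]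
    (c d : ℝ) (hc : 0 ≤ c) (hd : 0 ≤ d) :
    AUCRisk f μ (ENNReal.ofReal c • ν₁ + ENNReal.ofReal d • ν₂)
      = c * AUCRisk f μ ν₁ + d * AUCRisk f μ ν₂ := by
  rw [auc_eq hf, auc_eq hf, auc_eq hf]
  have hpt : ∀ x, ((ENNReal.ofReal c • ν₁ + ENNReal.ofReal d • ν₂)
        {x' | f x < f x'}).toReal
      = c * (ν₁ {x' | f x < f x'}).toReal + d * (ν₂ {x' | f x < f x'}).toReal := by
    intro x
    rw [Measure.add_apply, Measure.smul_apply, Measure.smul_apply, smul_eq_mul, smul_eq_mul,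
      ENNReal.toReal_add (by finiteness) (by finiteness),
      ENNReal.toReal_mul, ENNReal.toReal_mul,
      ENNReal.toReal_ofReal hc, ENNReal.toReal_ofReal hd]
  simp_rw [hpt]
  rw [integral_add ((integrable_G hf μ ν₁).const_mul c) ((integrable_G hf μ ν₂).const_mul d),
    integral_const_mul, integral_const_mul]

/-- Fubini swap form. -/
lemma auc_swap (hf : Measurable f) (μ ν : Measure X)
    [IsFiniteMeasure μ] [SFinite ν] [IsFiniteMeasure ν] :
    AUCRisk f ν μ = ∫ x, (ν {x' | f x' < f x}).toReal ∂μ := by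
  unfold AUCRisk
  have hmeas : Measurable fun p : X × X => (if f p.1 - f p.2 < 0 then (1:ℝ) else 0) := by
    have : MeasurableSet {p : X × X | f p.1 - f p.2 < 0} :=
      measurableSet_lt ((hf.comp measurable_fst).sub (hf.comp measurable_snd)) measurable_const
    exact Measurable.ite this measurable_const measurable_const
  have hint : Integrable (fun p : X × X => (if f p.1 - f p.2 < 0 then (1:ℝ) else 0)) (ν.prod μ) := by
    apply Integrable.mono' (integrable_const (1:ℝ)) hmeas.aestronglyMeasurable
    refine Filter.Eventually.of_forall fun p => ?_
    by_cases hc : f p.1 - f p.2 < 0 <;> simp [hc]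
  rw [integral_integral_swap hint]
  refine integral_congr_ae (Filter.Eventually.of_forall fun x => ?_)
  have h : ∀ y, (if f y - f x < 0 then (1:ℝ) else 0)
      = Set.indicator {y | f y < f x} (fun _ => (1:ℝ)) y := by
    intro y
    by_cases hc : f y < f x <;> simp [Set.indicator, hc, sub_neg]
  simp_rw [h]
  rw [integral_indicator_const (1:ℝ) (measurableSet_lt hf measurable_const)]
  simp
  rfl

/-- No-ties complement identity. -/
lemma auc_compl (hf : Measurable f) (μ ν : Measure X)
    [IsProbabilityMeasure μ] [IsProbabilityMeasure ν]
    (hν : ∀ t : ℝ, ν {x | f x = t} = 0) :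
    AUCRisk f μ ν + AUCRisk f ν μ = 1 := by
  rw [auc_eq hf, auc_swap hf]
  rw [← integral_add (integrable_G hf μ ν) (integrable_G' hf μ ν)]
  have key : ∀ x, (ν {x' | f x < f x'}).toReal + (ν {x' | f x' < f x}).toReal = 1 := by
    intro x
    have hdisj : Disjoint {x' | f x < f x'} {x' | f x' < f x} := by
      rw [Set.disjoint_left]
      intro a ha hb
      simp only [Set.mem_setOf_eq] at ha hb
      exact absurd (lt_trans ha hb) (lt_irrefl _)
    have hun : {x' | f x < f x'} ∪ {x' | f x' < f x} = {x' | f x' = f x}ᶜ := by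
      ext a
      simp only [Set.mem_union, Set.mem_setOf_eq, Set.mem_compl_iff]
      constructor
      · rintro (h | h) he <;> simp [he] at h
      · intro h
        rcases lt_or_gt_of_ne (h : f a ≠ f x) with h1 | h1
        · exact Or.inr h1
        · exact Or.inl h1
    have h0 : ν {x' | f x' = f x} = 0 := hν (f x)
    have hms : MeasurableSet {x' | f x' = f x} := hf (measurableSet_singleton (f x))
    have hcompl : ν ({x' | f x' = f x}ᶜ) = 1 := by
      rw [measure_compl hms (measure_ne_top ν _), h0]
      simp
    have hsum : ν {x' | f x < f x'} + ν {x' | f x' < f x} = 1 := by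
      rw [← measure_union hdisj (measurableSet_lt hf measurable_const), hun, hcompl]
    rw [← ENNReal.toReal_add (by finiteness) (by finiteness), hsum]
    simp
  simp_rw [key]
  simp


end Aux

/-- noisy semi-supervised AUC identity:
`R(f; p_P̃, p_U) + R(f; p_U, p_Ñ) − 1/2 = ã·R_PN(f) + (1 − ã)/2`
with `ã = 1 − η_P − η_N`. -/
theorem noisy_semi_supervised_auc_identity {X : Type*} [MeasurableSpace X]
    (pP pN : Measure X) [IsProbabilityMeasure pP] [IsProbabilityMeasure pN]
    (πP πN : ℝ) (hπP : πP ∈ Set.Icc (0 : ℝ) 1) (hπN : πN ∈ Set.Icc (0 : ℝ) 1)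
    (hsum : πP + πN = 1)
    (ηP ηN : ℝ) (hηP : ηP ∈ Set.Icc (0 : ℝ) 1) (hηN : ηN ∈ Set.Icc (0 : ℝ) 1)
    (f : X → ℝ) (hf : Measurable f)
    (hP : ∀ t : ℝ, pP {x | f x = t} = 0)
    (hN : ∀ t : ℝ, pN {x | f x = t} = 0)
    (pPt pNt pU : Measure X)
    (hpPt : pPt = ENNReal.ofReal (1 - ηP) • pP + ENNReal.ofReal ηP • pN)
    (hpNt : pNt = ENNReal.ofReal ηN • pP + ENNReal.ofReal (1 - ηN) • pN)
    (hpU : pU = ENNReal.ofReal πP • pP + ENNReal.ofReal πN • pN) :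
    AUCRisk f pPt pU + AUCRisk f pU pNt - 1 / 2
      = (1 - ηP - ηN) * AUCRisk f pP pN + (1 - (1 - ηP - ηN)) / 2 := by
  haveI hUfin : IsFiniteMeasure pU := by
    constructor
    rw [hpU]
    simp only [Measure.add_apply, Measure.smul_apply, smul_eq_mul, measure_univ, mul_one]
    exact ENNReal.add_lt_top.mpr ⟨ENNReal.ofReal_lt_top, ENNReal.ofReal_lt_top⟩
  set a := AUCRisk f pP pN with ha
  have hPP : AUCRisk f pP pP = 1 / 2 := by
    have := auc_compl hf pP pP hP; linarith
  have hNN : AUCRisk f pN pN = 1 / 2 := by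
    have := auc_compl hf pN pN hN; linarith
  have hNP : AUCRisk f pN pP = 1 - a := by
    have := auc_compl hf pP pN hN; linarith
  have e1 : AUCRisk f pPt pU
      = (1 - ηP) * AUCRisk f pP pU + ηP * AUCRisk f pN pU := by
    rw [hpPt]; exact auc_left hf pP pN pU _ _ (by linarith [hηP.2]) hηP.1
  have e2 : AUCRisk f pP pU = πP * (1 / 2) + πN * a := by
    rw [hpU, auc_right hf pP pP pN _ _ hπP.1 hπN.1, hPP]
  have e3 : AUCRisk f pN pU = πP * (1 - a) + πN * (1 / 2) := by
    rw [hpU, auc_right hf pN pP pN _ _ hπP.1 hπN.1, hNP, hNN]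
  have e4 : AUCRisk f pU pNt
      = ηN * AUCRisk f pU pP + (1 - ηN) * AUCRisk f pU pN := by
    rw [hpNt]; exact auc_right hf pU pP pN _ _ hηN.1 (by linarith [hηN.2])
  have e5 : AUCRisk f pU pP = πP * (1 / 2) + πN * (1 - a) := by
    rw [hpU, auc_left hf pP pN pP _ _ hπP.1 hπN.1, hPP, hNP]
  have e6 : AUCRisk f pU pN = πP * a + πN * (1 / 2) := by
    rw [hpU, auc_left hf pP pN pN _ _ hπP.1 hπN.1, hNN]
  rw [e1, e2, e3, e4, e5, e6]
  have hπ : πN = 1 - πP := by linarith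
  subst hπ
  ring
end
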